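/- Every inclusionwise minimal (1,k)-factor of a graph G is a perfect k-star packing. -/

import Mathlib

/-- `M` is a matching of `G`: a set of edges of `G` that are pairwise vertex-disjoint. -/
def IsMatching {V : Type*} (G : SimpleGraph V) (M : Finset (Sym2 V)) : Prop :=
  ↑M ⊆ G.edgeSet ∧ (M : Set (Sym2 V)).Pairwise fun e f => ∀ v : V, ¬(v ∈ e ∧ v ∈ f)

/-- A vertex `v` is covered by an edge set `F` if some edge of `F` is incident to it. -/
def Covers {V : Type*} (F : Finset (Sym2 V)) (v : V) : Prop := ∃ e ∈ F, v ∈ e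

instance {V : Type*} [DecidableEq V] (F : Finset (Sym2 V)) (v : V) : Decidable (Covers F v) :=
  inferInstanceAs (Decidable (∃ e ∈ F, v ∈ e))

/-- A stable (independent) set of vertices. -/
def IsStable {V : Type*} (G : SimpleGraph V) (S : Finset V) : Prop :=
  ∀ u ∈ S, ∀ v ∈ S, ¬ G.Adj u v

/-- The external neighborhood `N(S)`. -/
def nbr {V : Type*} [Fintype V] [DecidableEq V] (G : SimpleGraph V) [DecidableRel G.Adj]
    (S : Finset V) : Finset V :=
  Finset.univ.filter fun w => w ∉ S ∧ ∃ u ∈ S, G.Adj u w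

/-- degree of a vertex in an edge set -/
def degF {V : Type*} [DecidableEq V] (F : Finset (Sym2 V)) (v : V) : ℕ :=
  (F.filter fun e => v ∈ e).card

/-- `F` is a perfect `k`-star packing: every component of `F` is a star with
between 1 and `k` edges, and `F` covers every vertex.  Components are stars with
at most `k` edges iff all degrees are at most `k` and no edge joins two vertices
of degree at least 2. -/
def IsPerfectKStarPacking {V : Type*} [DecidableEq V] (G : SimpleGraph V)
    (F : Finset (Sym2 V)) (k : ℕ) : Prop :=
  ↑F ⊆ G.edgeSet ∧ (∀ v : V, degF F v ≤ k) ∧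
    (∀ e ∈ F, ∀ u v : V, e = s(u, v) → degF F u = 1 ∨ degF F v = 1) ∧
    ∀ v : V, Covers F v

/-- `F` is a matching-`k`-cover: the union of `k` matchings of `G` covering every vertex. -/
def IsMatchingKCover {V : Type*} [DecidableEq V] (G : SimpleGraph V) (F : Finset (Sym2 V)) (k : ℕ) : Prop :=
  (∃ M : Fin k → Finset (Sym2 V), (∀ i, IsMatching G (M i)) ∧ F = Finset.univ.sup M) ∧
    ∀ v : V, Covers F v

/-- `F` is a `(1,k)`-factor: every vertex is incident to at least 1 and at most `k` edges of `F`. -/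
def Is1kFactor {V : Type*} [DecidableEq V] (G : SimpleGraph V)
    (F : Finset (Sym2 V)) (k : ℕ) : Prop :=
  ↑F ⊆ G.edgeSet ∧ ∀ v : V, 1 ≤ degF F v ∧ degF F v ≤ k

/-- inclusionwise minimality of an edge set with respect to a property -/
def MinimalForEdges {V : Type*} (P : Finset (Sym2 V) → Prop) (F : Finset (Sym2 V)) : Prop :=
  P F ∧ ∀ F' ⊂ F, ¬ P F'
lemma degF_erase {V : Type*} [DecidableEq V] (F : Finset (Sym2 V)) (e : Sym2 V) (w : V)
    (he : e ∈ F) (hw : w ∈ e) : degF (F.erase e) w = degF F w - 1 := by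
  unfold degF
  rw [Finset.filter_erase, Finset.card_erase_of_mem (Finset.mem_filter.mpr ⟨he, hw⟩)]

lemma degF_erase_not_mem {V : Type*} [DecidableEq V] (F : Finset (Sym2 V)) (e : Sym2 V) (w : V)
    (hw : w ∉ e) : degF (F.erase e) w = degF F w := by
  unfold degF
  rw [Finset.filter_erase, Finset.erase_eq_of_notMem]
  simp [hw]

theorem stmt_8 {V : Type*} [Fintype V] [DecidableEq V] (G : SimpleGraph V)
    (k : ℕ) (F : Finset (Sym2 V))
    (hmin : MinimalForEdges (fun F' => Is1kFactor G F' k) F) :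
    IsPerfectKStarPacking G F k := by
  obtain ⟨⟨hsub, hdeg⟩, hmin'⟩ := hmin
  refine ⟨hsub, fun v => (hdeg v).2, ?_, ?_⟩
  · intro e he u v hev
    by_contra hcon
    push_neg at hcon
    obtain ⟨hu, hv⟩ := hcon
    have hu2 : 2 ≤ degF F u := by have := (hdeg u).1; omega
    have hv2 : 2 ≤ degF F v := by have := (hdeg v).1; omega
    refine hmin' (F.erase e) (Finset.erase_ssubset he) ⟨?_, ?_⟩
    · exact fun x hx => hsub (Finset.erase_subset e F hx)
    · intro w
      by_cases hw : w ∈ e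
      · rw [degF_erase F e w he hw]
        have hwuv : w = u ∨ w = v := by
          subst hev; simpa using hw
        have h2 : 2 ≤ degF F w := by rcases hwuv with rfl | rfl <;> assumption
        have := (hdeg w).2
        omega
      · rw [degF_erase_not_mem F e w hw]
        exact hdeg w
  · intro v
    have h1 := (hdeg v).1
    unfold degF at h1
    obtain ⟨e, he⟩ := Finset.card_pos.mp h1
    simp only [Finset.mem_filter] at he
    exact ⟨e, he.1, he.2⟩
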